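/- Let n and b be natural numbers with b ≥ 2, and set s_0 = (b+1)·b^n − 1. If x ∈ T_b(n) and x is not divisible by s_0, then there exists y ∈ T_b(n) with x = y + (b−1); that is, x − (b−1) ∈ T_b(n). -/

import Mathlib

/-- The Thabit numerical semigroup base `b`: the additive submonoid of ℕ generated by
`{(b+1)·b^(n+i) − 1 : i ∈ ℕ}`. -/
def thabitSemigroup (b n : ℕ) : AddSubmonoid ℕ :=
  AddSubmonoid.closure {m : ℕ | ∃ i : ℕ, m = (b + 1) * b ^ (n + i) - 1}

theorem thabit_sub_pred_base_mem (n b : ℕ) (hb : 2 ≤ b) (x : ℕ)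
    (hx : x ∈ thabitSemigroup b n)
    (hndvd : ¬ ((b + 1) * b ^ n - 1) ∣ x) :
    ∃ y ∈ thabitSemigroup b n, x = y + (b - 1) := by
  have key : ∀ z ∈ thabitSemigroup b n,
      ((b + 1) * b ^ n - 1) ∣ z ∨ ∃ y ∈ thabitSemigroup b n, z = y + (b - 1) := by
    intro z hz
    induction hz using AddSubmonoid.closure_induction with
    | mem m hm =>
        obtain ⟨i, rfl⟩ := hm
        cases i with
        | zero => left; simp
        | succ j =>
            right
            refine ⟨b * ((b + 1) * b ^ (n + j) - 1), ?_, ?_⟩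
            · have hg : (b + 1) * b ^ (n + j) - 1 ∈ thabitSemigroup b n :=
                AddSubmonoid.subset_closure ⟨j, rfl⟩
              simpa [smul_eq_mul] using AddSubmonoid.nsmul_mem _ hg b
            · have hP : 1 ≤ (b + 1) * b ^ (n + j) := Nat.one_le_iff_ne_zero.mpr (by positivity)
              obtain ⟨d, hd⟩ := Nat.exists_eq_add_of_le hP
              have h2 : (b + 1) * b ^ (n + (j + 1)) = ((b + 1) * b ^ (n + j)) * b := by
                ring
              rw [h2, hd]
              have h3 : 1 + d - 1 = d := by omega
              rw [h3, Nat.add_mul, Nat.one_mul, Nat.mul_comm b d]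
              have hdb : 0 ≤ d * b := Nat.zero_le _
              omega
    | zero => left; exact dvd_zero _
    | add a c _ _ iha ihc =>
        rcases iha with ha | ⟨y, hy, rfl⟩
        · rcases ihc with hc | ⟨y, hy, rfl⟩
          · left; exact Dvd.dvd.add ha hc
          · right
            exact ⟨a + y, AddSubmonoid.add_mem _ (by assumption) hy, by omega⟩
        · right
          refine ⟨y + c, AddSubmonoid.add_mem _ hy (by assumption), by omega⟩
  rcases key x hx with h | h
  · exact absurd h hndvd
  · exact h
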